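/- Let k and b be positive integers with b dividing k, and let W ⊆ [0,k] be a Lebesgue-measurable set. Then there exists t ∈ [0, k-b] such that the Lebesgue measure of W ∩ [t, t+b] equals (b/k) times the Lebesgue measure of W. -/

import Mathlib

open MeasureTheory

theorem stmt6 (k b : ℕ) (hk : 0 < k) (hb : 0 < b) (hbk : b ∣ k)
    (W : Set ℝ) (hWm : MeasurableSet W) (hWs : W ⊆ Set.Icc 0 (k : ℝ)) :
    ∃ t ∈ Set.Icc (0 : ℝ) ((k : ℝ) - (b : ℝ)),
      volume (W ∩ Set.Icc t (t + (b : ℝ))) = ((b : ENNReal) / (k : ENNReal)) * volume W := by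
  obtain ⟨n, rfl⟩ := hbk
  have hn : 0 < n := Nat.pos_of_ne_zero (by rintro rfl; simp at hk)
  have hWfin : volume W ≠ ⊤ :=
    ((measure_mono hWs).trans_lt isCompact_Icc.measure_lt_top).ne
  set g : ℝ → ℝ := fun x => (volume (W ∩ Set.Icc 0 x)).toReal with hg
  have hfin : ∀ x : ℝ, volume (W ∩ Set.Icc 0 x) ≠ ⊤ := fun x =>
    ((measure_mono Set.inter_subset_left).trans_lt hWfin.lt_top).ne
  -- g is 1-Lipschitz
  have hLip : LipschitzWith 1 g := by
    apply LipschitzWith.of_dist_le_mul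
    intro x y
    wlog hxy : y ≤ x generalizing x y
    · rw [dist_comm x y, dist_comm (g x) (g y)]; exact this y x (le_of_not_ge hxy)
    have hmono : g y ≤ g x :=
      ENNReal.toReal_mono (hfin x)
        (measure_mono (Set.inter_subset_inter_right _ (Set.Icc_subset_Icc_right hxy)))
    have step : volume (W ∩ Set.Icc 0 x) ≤ volume (W ∩ Set.Icc 0 y) + volume (Set.Ioc y x) := by
      calc volume (W ∩ Set.Icc 0 x) ≤ volume ((W ∩ Set.Icc 0 y) ∪ Set.Ioc y x) := by
            apply measure_mono
            rintro z ⟨hzW, hz0, hzx⟩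
            rcases le_or_gt z y with h | h
            · exact Or.inl ⟨hzW, hz0, h⟩
            · exact Or.inr ⟨h, hzx⟩
        _ ≤ _ := measure_union_le _ _
    have hub : g x ≤ g y + (x - y) := by
      have h1 := ENNReal.toReal_mono (by
        simp only [ne_eq, ENNReal.add_eq_top, hfin y, false_or]
        simp [Real.volume_Ioc]) step
      rw [ENNReal.toReal_add (hfin y) (by simp [Real.volume_Ioc]), Real.volume_Ioc,
        ENNReal.toReal_ofReal (sub_nonneg.2 hxy)] at h1
      exact h1
    rw [Real.dist_eq, Real.dist_eq, abs_of_nonneg (sub_nonneg.2 hmono),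
      abs_of_nonneg (sub_nonneg.2 hxy)]
    simp only [NNReal.coe_one, one_mul]
    linarith
  set f : ℝ → ℝ := fun t => g (t + (b : ℝ)) - g t with hf
  have hfc : Continuous f :=
    (hLip.continuous.comp (continuous_id.add continuous_const)).sub hLip.continuous
  set u : ℕ → ℝ := fun i => g ((i : ℝ) * b) with hu
  have hsum : ∑ i ∈ Finset.range n, f ((i : ℝ) * b) = (volume W).toReal := by
    have heq : ∀ i : ℕ, f ((i : ℝ) * b) = u (i + 1) - u i := by
      intro i
      simp only [hf, hu]
      congr 2
      push_cast
      ring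
    rw [Finset.sum_congr rfl fun i _ => heq i, Finset.sum_range_sub u n]
    have hu0 : u 0 = 0 := by
      have hz : volume (W ∩ Set.Icc (0:ℝ) 0) = 0 :=
        le_antisymm ((measure_mono Set.inter_subset_right).trans (by simp)) (zero_le)
      show (volume (W ∩ Set.Icc 0 (((0:ℕ):ℝ) * b))).toReal = 0
      rw [Nat.cast_zero, zero_mul, hz, ENNReal.toReal_zero]
    have hun : u n = (volume W).toReal := by
      show (volume (W ∩ Set.Icc 0 ((n:ℝ) * b))).toReal = _
      have : W ∩ Set.Icc 0 ((n : ℝ) * b) = W := by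
        apply Set.inter_eq_left.2
        intro z hz
        have := hWs hz
        rwa [Nat.cast_mul, mul_comm (b:ℝ)] at this
      rw [this]
    rw [hu0, hun, sub_zero]
  set A : ℝ := (volume W).toReal / n with hA
  have hAsum : ∑ _i ∈ Finset.range n, A = (volume W).toReal := by
    rw [Finset.sum_const, Finset.card_range, nsmul_eq_mul, hA]
    field_simp
  have hne : (Finset.range n).Nonempty := ⟨0, Finset.mem_range.2 hn⟩
  obtain ⟨i, hi, hiA⟩ : ∃ i ∈ Finset.range n, f ((i : ℝ) * b) ≤ A :=
    Finset.exists_le_of_sum_le hne (le_of_eq (hsum.trans hAsum.symm))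
  obtain ⟨j, hj, hjA⟩ : ∃ j ∈ Finset.range n, A ≤ f ((j : ℝ) * b) :=
    Finset.exists_le_of_sum_le hne (le_of_eq (hAsum.trans hsum.symm))
  -- IVT
  have hIV := intermediate_value_uIcc (a := (i : ℝ) * b) (b := (j : ℝ) * b)
    (hfc.continuousOn (s := Set.uIcc ((i:ℝ)*b) ((j:ℝ)*b)))
  have hAmem : A ∈ Set.uIcc (f ((i : ℝ) * b)) (f ((j : ℝ) * b)) :=
    Set.Icc_subset_uIcc ⟨hiA, hjA⟩
  obtain ⟨t, htmem, hft⟩ := hIV hAmem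
  have hbound : ∀ m : ℕ, m ∈ Finset.range n → (m : ℝ) * b ∈ Set.Icc (0:ℝ) ((b*n : ℕ) - (b:ℝ)) := by
    intro m hm
    have hm' : (m : ℝ) ≤ n - 1 := by
      have := Finset.mem_range.1 hm
      have : (m : ℝ) + 1 ≤ n := by exact_mod_cast this
      linarith
    constructor
    · positivity
    · push_cast
      nlinarith [hb.le, (Nat.cast_pos (α := ℝ)).2 hb]
  have htIcc : t ∈ Set.Icc (0:ℝ) ((b*n : ℕ) - (b:ℝ)) :=
    (Set.uIcc_subset_Icc (hbound i hi) (hbound j hj)) htmem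
  refine ⟨t, htIcc, ?_⟩
  have ht0 : 0 ≤ t := htIcc.1
  have htb : t ≤ t + (b : ℝ) := by
    have : (0:ℝ) ≤ b := by positivity
    linarith
  -- vol (W ∩ Icc t (t+b)) = f t
  have hsplit : volume (W ∩ Set.Icc 0 (t + b)) =
      volume (W ∩ Set.Icc 0 t) + volume (W ∩ Set.Ioc t (t + b)) := by
    rw [← measure_union (by
        exact ((Set.Iic_disjoint_Ioc le_rfl).mono Set.Icc_subset_Iic_self le_rfl).mono Set.inter_subset_right Set.inter_subset_right)
      (hWm.inter measurableSet_Ioc)]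
    congr 1
    rw [← Set.inter_union_distrib_left, Set.Icc_union_Ioc_eq_Icc ht0 htb]
  have hIocIcc : volume (W ∩ Set.Ioc t (t + b)) = volume (W ∩ Set.Icc t (t + b)) := by
    apply le_antisymm (measure_mono (Set.inter_subset_inter_right _ Set.Ioc_subset_Icc_self))
    calc volume (W ∩ Set.Icc t (t + b)) ≤ volume ((W ∩ Set.Ioc t (t + b)) ∪ {t}) := by
          apply measure_mono
          rintro z ⟨hzW, hzt, hztb⟩
          rcases eq_or_lt_of_le hzt with h | h
          · exact Or.inr (by simp [h.symm])
          · exact Or.inl ⟨hzW, h, hztb⟩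
      _ ≤ volume (W ∩ Set.Ioc t (t + b)) + volume ({t} : Set ℝ) := measure_union_le _ _
      _ = volume (W ∩ Set.Ioc t (t + b)) := by simp
  have hfinIcc : volume (W ∩ Set.Icc t (t + b)) ≠ ⊤ :=
    ((measure_mono Set.inter_subset_left).trans_lt hWfin.lt_top).ne
  have hft' : (volume (W ∩ Set.Icc t (t + b))).toReal = f t := by
    have : g (t + b) = g t + (volume (W ∩ Set.Icc t (t + b))).toReal := by
      simp only [hg]
      rw [hsplit, hIocIcc, ENNReal.toReal_add (hfin t) hfinIcc]
    simp only [hf]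
    linarith
  have hvol : volume (W ∩ Set.Icc t (t + b)) = ENNReal.ofReal A := by
    rw [← hft, ← hft', ENNReal.ofReal_toReal hfinIcc]
  rw [hvol]
  -- RHS
  have hb' : (b : ENNReal) ≠ 0 := by exact_mod_cast hb.ne'
  have hbt : (b : ENNReal) ≠ ⊤ := ENNReal.natCast_ne_top b
  have hkcast : ((b * n : ℕ) : ENNReal) = (b : ENNReal) * n := by push_cast; ring
  rw [hkcast]
  have hdiv : (b : ENNReal) / ((b : ENNReal) * n) = 1 / n := by
    have h1 := ENNReal.mul_div_mul_left (1 : ENNReal) (n : ENNReal) hb' hbt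
    rw [mul_one] at h1
    exact h1
  rw [hdiv]
  rw [hA, ENNReal.ofReal_div_of_pos (by exact_mod_cast hn), ENNReal.ofReal_toReal hWfin,
    ENNReal.ofReal_natCast]
  rw [one_div, div_eq_mul_inv, mul_comm]
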